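/- Let Σ̂ be an n×n real symmetric positive definite matrix and δ > 0. (i) For every λ > 0 and all n×n real symmetric Γ, Θ with Θ − Γ ⪯ I and Σ̂⁻¹ + λ⁻¹(Θ − Γ) ≻ 0, one has J̃(λ,Γ,Θ) ≥ λ( log det( (Σ̂⁻¹ + λ⁻¹I)⁻¹ Σ̂⁻¹ ) + δ ). (ii) Consequently, for any sequence (λ_k, Γ_k, Θ_k) satisfying these constraints with λ_k → ∞, one has J̃(λ_k, Γ_k, Θ_k) → +∞; in particular such a sequence is not an infimizing sequence for J̃. -/

import Mathlib

open Filter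

section Aux
open Matrix

lemma aux_smul_posSemidef {n : ℕ} {c : ℝ} (hc : 0 ≤ c) {M : Matrix (Fin n) (Fin n) ℝ}
    (hM : M.PosSemidef) : (c • M).PosSemidef := by
  refine .of_dotProduct_mulVec_nonneg ?_ fun x => ?_
  · unfold Matrix.IsHermitian
    rw [conjTranspose_smul, hM.1.eq]
    simp
  · rw [smul_mulVec, dotProduct_smul]
    exact mul_nonneg hc (hM.dotProduct_mulVec_nonneg x)

lemma aux_one_le_det_one_add {n : ℕ} {M : Matrix (Fin n) (Fin n) ℝ}
    (hM : M.PosSemidef) : 1 ≤ (1 + M).det := by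
  have hH : (1 + M : Matrix (Fin n) (Fin n) ℝ).IsHermitian :=
    Matrix.isHermitian_one.add hM.1
  have key : ∀ i, 1 ≤ hH.eigenvalues i := by
    intro i
    have hv1 : (inner ℝ (hH.eigenvectorBasis i) (hH.eigenvectorBasis i) : ℝ) = 1 := by
      have := hH.eigenvectorBasis.orthonormal.1 i
      rw [real_inner_self_eq_norm_sq, this, one_pow]
    have hdot : dotProduct (star ⇑(hH.eigenvectorBasis i)) ⇑(hH.eigenvectorBasis i) = 1 := by
      exact (EuclideanSpace.inner_eq_star_dotProduct (hH.eigenvectorBasis i)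
        (hH.eigenvectorBasis i)).symm.trans hv1
    have := hH.eigenvalues_eq i
    rw [this]
    have hexp : dotProduct (star ⇑(hH.eigenvectorBasis i))
        ((1 + M) *ᵥ ⇑(hH.eigenvectorBasis i))
        = 1 + dotProduct (star ⇑(hH.eigenvectorBasis i))
          (M *ᵥ ⇑(hH.eigenvectorBasis i)) := by
      rw [add_mulVec, one_mulVec, dotProduct_add, hdot]
    rw [hexp]
    simpa using hM.dotProduct_mulVec_nonneg ⇑(hH.eigenvectorBasis i)
  calc (1:ℝ) = ∏ _i : Fin n, (1:ℝ) := by simp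
    _ ≤ ∏ i, hH.eigenvalues i :=
        Finset.prod_le_prod (by simp) (fun i _ => key i)
    _ = (1 + M).det := by rw [hH.det_eq_prod_eigenvalues]; norm_num

lemma aux_det_le_det {n : ℕ} {A B : Matrix (Fin n) (Fin n) ℝ}
    (hA : A.PosDef) (hBA : (B - A).PosSemidef) : A.det ≤ B.det := by
  set R := (open scoped MatrixOrder in CFC.sqrt A) with hRdef
  have hR : R.PosSemidef := by open scoped MatrixOrder in exact (CFC.sqrt_nonneg A).posSemidef
  have hRR : R * R = A := by
    open scoped MatrixOrder in exact CFC.sqrt_mul_sqrt_self A hA.posSemidef.nonneg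
  have hRdet : R.det ≠ 0 := by
    intro h
    have : A.det = 0 := by rw [← hRR, det_mul, h, mul_zero]
    exact hA.det_pos.ne' this
  have hM : ((R⁻¹)ᴴ * (B - A) * R⁻¹).PosSemidef := hBA.conjTranspose_mul_mul_same R⁻¹
  have hRH : (R⁻¹)ᴴ = R⁻¹ := (hR.1.inv).eq
  rw [hRH] at hM
  have hB : B = R * (1 + R⁻¹ * (B - A) * R⁻¹) * R := by
    rw [mul_add, mul_one, add_mul, hRR]
    rw [show R * (R⁻¹ * (B - A) * R⁻¹) * R = R * R⁻¹ * (B - A) * (R⁻¹ * R) by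
      simp only [Matrix.mul_assoc]]
    rw [Matrix.mul_nonsing_inv _ (Ne.isUnit hRdet), Matrix.nonsing_inv_mul _ (Ne.isUnit hRdet),
      one_mul, mul_one, add_sub_cancel]
  calc A.det = R.det * 1 * R.det := by rw [mul_one, ← det_mul, hRR]
    _ ≤ R.det * (1 + R⁻¹ * (B - A) * R⁻¹).det * R.det := by
        have h1 : 1 ≤ (1 + R⁻¹ * (B - A) * R⁻¹).det := aux_one_le_det_one_add hM
        have hRpos : 0 < R.det := by
          have hnn : 0 ≤ R.det := by
            rw [hR.1.det_eq_prod_eigenvalues]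
            exact Finset.prod_nonneg fun i _ => hR.eigenvalues_nonneg i
          exact lt_of_le_of_ne hnn (Ne.symm hRdet)
        nlinarith [mul_pos hRpos hRpos]
    _ = B.det := by rw [← det_mul, ← det_mul, ← hB]

end Aux

/-- The dual objective `J̃(λ,Γ,Θ) := λ(−log det(Ŝ⁻¹ + λ⁻¹(Θ − Γ)) − log det Ŝ + δ)`. -/
noncomputable def Jt {n : ℕ} (S : Matrix (Fin n) (Fin n) ℝ) (δ : ℝ)
    (l : ℝ) (Γ Θ : Matrix (Fin n) (Fin n) ℝ) : ℝ :=
  l * (-Real.log ((S⁻¹ + l⁻¹ • (Θ - Γ)).det) - Real.log S.det + δ)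

/-- Let `Ŝ ≻ 0` and `δ > 0`.
(i) For `λ > 0` and symmetric `Γ, Θ` with `Θ − Γ ⪯ I` and `Ŝ⁻¹ + λ⁻¹(Θ − Γ) ≻ 0`,
`J̃(λ,Γ,Θ) ≥ λ(log det((Ŝ⁻¹ + λ⁻¹I)⁻¹ Ŝ⁻¹) + δ)`.
(ii) Consequently, along any sequence satisfying these constraints with `λ_k → ∞`,
`J̃(λ_k,Γ_k,Θ_k) → +∞`; in particular such a sequence is not infimizing. -/
theorem stmt8 {n : ℕ} (S : Matrix (Fin n) (Fin n) ℝ) (hS : S.PosDef)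
    (δ : ℝ) (hδ : 0 < δ) :
    (∀ (l : ℝ) (Γ Θ : Matrix (Fin n) (Fin n) ℝ), 0 < l → Γ.IsSymm → Θ.IsSymm →
      (1 - (Θ - Γ)).PosSemidef → (S⁻¹ + l⁻¹ • (Θ - Γ)).PosDef →
      Jt S δ l Γ Θ ≥ l * (Real.log (((S⁻¹ + l⁻¹ • 1)⁻¹ * S⁻¹).det) + δ)) ∧
    (∀ (l : ℕ → ℝ) (Γ Θ : ℕ → Matrix (Fin n) (Fin n) ℝ),
      (∀ k, 0 < l k) → (∀ k, (Γ k).IsSymm) → (∀ k, (Θ k).IsSymm) →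
      (∀ k, (1 - (Θ k - Γ k)).PosSemidef) →
      (∀ k, (S⁻¹ + (l k)⁻¹ • (Θ k - Γ k)).PosDef) →
      Tendsto l atTop atTop →
      Tendsto (fun k => Jt S δ (l k) (Γ k) (Θ k)) atTop atTop) := by
  have hSinv : S⁻¹.PosDef := hS.inv
  have hBpos : ∀ t : ℝ, 0 ≤ t → (S⁻¹ + t • (1 : Matrix (Fin n) (Fin n) ℝ)).PosDef := by
    intro t ht
    exact hSinv.add_posSemidef (aux_smul_posSemidef ht Matrix.PosDef.one.posSemidef)
  have key : ∀ (l : ℝ) (Γ Θ : Matrix (Fin n) (Fin n) ℝ), 0 < l → Γ.IsSymm → Θ.IsSymm →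
      (1 - (Θ - Γ)).PosSemidef → (S⁻¹ + l⁻¹ • (Θ - Γ)).PosDef →
      Jt S δ l Γ Θ ≥ l * (Real.log (((S⁻¹ + l⁻¹ • 1)⁻¹ * S⁻¹).det) + δ) := by
    intro l Γ Θ hl hΓ hΘ hPSD hPD
    have hB : (S⁻¹ + l⁻¹ • (1 : Matrix (Fin n) (Fin n) ℝ)).PosDef :=
      hBpos l⁻¹ (inv_nonneg.2 hl.le)
    have hdiff : (S⁻¹ + l⁻¹ • (1 : Matrix (Fin n) (Fin n) ℝ)) - (S⁻¹ + l⁻¹ • (Θ - Γ))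
        = l⁻¹ • (1 - (Θ - Γ)) := by
      rw [smul_sub]
      abel_nf
      module
    have hle : (S⁻¹ + l⁻¹ • (Θ - Γ)).det ≤ (S⁻¹ + l⁻¹ • (1 : Matrix (Fin n) (Fin n) ℝ)).det :=
      aux_det_le_det hPD (hdiff ▸ aux_smul_posSemidef (inv_nonneg.2 hl.le) hPSD)
    have hlog : Real.log ((S⁻¹ + l⁻¹ • (Θ - Γ)).det)
        ≤ Real.log ((S⁻¹ + l⁻¹ • (1 : Matrix (Fin n) (Fin n) ℝ)).det) :=
      Real.log_le_log hPD.det_pos hle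
    have hRHS : Real.log (((S⁻¹ + l⁻¹ • (1 : Matrix (Fin n) (Fin n) ℝ))⁻¹ * S⁻¹).det)
        = -Real.log ((S⁻¹ + l⁻¹ • (1 : Matrix (Fin n) (Fin n) ℝ)).det) - Real.log S.det := by
      rw [Matrix.det_mul, Matrix.det_nonsing_inv, Ring.inverse_eq_inv,
        Matrix.det_nonsing_inv, Ring.inverse_eq_inv,
        Real.log_mul (by have := hB.det_pos; positivity) (by have := hS.det_pos; positivity),
        Real.log_inv, Real.log_inv]
      ring
    rw [ge_iff_le, hRHS, Jt]
    apply mul_le_mul_of_nonneg_left _ hl.le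
    linarith
  refine ⟨key, ?_⟩
  intro l Γ Θ hl hΓ hΘ hPSD hPD hTend
  set h : ℝ → ℝ := fun t => Real.log (((S⁻¹ + t • (1 : Matrix (Fin n) (Fin n) ℝ))⁻¹ * S⁻¹).det)
    with hdef
  have heq : h = fun t => Real.log
      (((S⁻¹ + t • (1 : Matrix (Fin n) (Fin n) ℝ)).det)⁻¹ * S⁻¹.det) := by
    funext t
    show Real.log (((S⁻¹ + t • (1 : Matrix (Fin n) (Fin n) ℝ))⁻¹ * S⁻¹).det) = _
    rw [Matrix.det_mul, Matrix.det_nonsing_inv, Ring.inverse_eq_inv]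
  have hSinvdet : (0:ℝ) < S⁻¹.det := hSinv.det_pos
  have hcont : ContinuousAt h 0 := by
    rw [heq]
    have hc1 : Continuous fun t : ℝ => (S⁻¹ + t • (1 : Matrix (Fin n) (Fin n) ℝ)).det :=
      Continuous.matrix_det (continuous_const.add (continuous_id.smul continuous_const))
    have hval : (S⁻¹ + (0:ℝ) • (1 : Matrix (Fin n) (Fin n) ℝ)).det = S⁻¹.det := by simp
    have hc2 : ContinuousAt (fun t : ℝ =>
        ((S⁻¹ + t • (1 : Matrix (Fin n) (Fin n) ℝ)).det)⁻¹ * S⁻¹.det) 0 :=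
      ((hc1.continuousAt).inv₀ (by rw [hval]; exact hSinvdet.ne')).mul continuousAt_const
    exact (Real.continuousAt_log (by rw [hval]; positivity)).comp hc2
  have h0 : h 0 = 0 := by
    rw [hdef]
    simp only [zero_smul, add_zero]
    rw [Matrix.nonsing_inv_mul S⁻¹ hSinv.det_pos.ne'.isUnit, Matrix.det_one, Real.log_one]
  have htend0 : Tendsto (fun k => h ((l k)⁻¹)) atTop (nhds 0) := by
    have hinv : Tendsto (fun k => (l k)⁻¹) atTop (nhds 0) := hTend.inv_tendsto_atTop
    have := (hcont.tendsto).comp hinv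
    rwa [h0] at this
  have hδtend : Tendsto (fun k => h ((l k)⁻¹) + δ) atTop (nhds δ) := by
    simpa using htend0.add tendsto_const_nhds
  have hmain : Tendsto (fun k => l k * (h ((l k)⁻¹) + δ)) atTop atTop :=
    Tendsto.atTop_mul_pos hδ hTend hδtend
  exact tendsto_atTop_mono
    (fun k => key (l k) (Γ k) (Θ k) (hl k) (hΓ k) (hΘ k) (hPSD k) (hPD k)) hmain
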